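/- Let R > 0, ζ ∈ ℝ³, 3/2 < q < ∞ and fix r ∈ (1, 3/2). Let g : ℝ³ × ℝ → ℝ be measurable with g(·,τ) supported in the ball B_R for each τ and sup_τ (‖g(·,τ)‖_{L^q(B_R)} + ‖g(·,τ)‖_{L^r(B_R)}) =: K < ∞. Then there is C = C(q,r,R) such that for all x ∈ ℝ³ and t ∈ ℝ, ∫₀^∞ ∫_{B_R} |g(y, t−s)| (|x + ζs − y|² + s)^{−3/2} dy ds ≤ C K. -/

import Mathlib

open MeasureTheory Real Set

noncomputable abbrev Ipot (P : ℝ) : ENNReal :=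
  ∫⁻ w : EuclideanSpace ℝ (Fin 3), ENNReal.ofReal ((1 + ‖w‖^2) ^ (-P))

lemma Ipot_lt_top {P : ℝ} (hP : 3/2 < P) : Ipot P < ⊤ := by
  have hP0 : 0 < P := by linarith
  have h2P : (Module.finrank ℝ (EuclideanSpace ℝ (Fin 3)) : ℝ) < 2 * P := by
    rw [finrank_euclideanSpace_fin]; norm_num; linarith
  have hpt : ∀ w : EuclideanSpace ℝ (Fin 3),
      (1 + ‖w‖^2) ^ (-P) ≤ 2 ^ P * (1 + ‖w‖) ^ (-(2*P)) := by
    intro w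
    set a := ‖w‖ with ha
    have ha0 : 0 ≤ a := norm_nonneg w
    have h1 : (1 + a)^2 / 2 ≤ 1 + a^2 := by nlinarith [sq_nonneg (1-a)]
    have h2 : (0:ℝ) < (1 + a)^2 / 2 := by positivity
    have h3 : (1 + a^2) ^ (-P) ≤ ((1 + a)^2 / 2) ^ (-P) :=
      Real.rpow_le_rpow_of_nonpos h2 h1 (by linarith)
    refine h3.trans_eq ?_
    rw [Real.div_rpow (by positivity) (by norm_num), ← Real.rpow_natCast (1+a) 2,
      ← Real.rpow_mul (by linarith), Real.rpow_neg (by norm_num : (0:ℝ) ≤ 2)]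
    rw [div_eq_mul_inv, inv_inv, mul_comm]
    congr 1
    push_cast
    ring
  calc Ipot P ≤ ∫⁻ w : EuclideanSpace ℝ (Fin 3),
        ENNReal.ofReal (2 ^ P * (1 + ‖w‖) ^ (-(2*P))) :=
        lintegral_mono fun w => ENNReal.ofReal_le_ofReal (hpt w)
    _ = ENNReal.ofReal (2 ^ P) * ∫⁻ w : EuclideanSpace ℝ (Fin 3),
        ENNReal.ofReal ((1 + ‖w‖) ^ (-(2*P))) := by
        simp_rw [ENNReal.ofReal_mul (by positivity : (0:ℝ) ≤ 2 ^ P)]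
        exact lintegral_const_mul' _ _ ENNReal.ofReal_ne_top
    _ < ⊤ := ENNReal.mul_lt_top ENNReal.ofReal_lt_top (finite_integral_one_add_norm h2P)

lemma lintegral_kernel (P : ℝ) {s : ℝ} (hs : 0 < s) :
    ∫⁻ z : EuclideanSpace ℝ (Fin 3), ENNReal.ofReal ((‖z‖^2 + s) ^ (-P))
      = ENNReal.ofReal (s ^ (3/2 - P)) * Ipot P := by
  set c := Real.sqrt s with hc
  have hc0 : 0 < c := Real.sqrt_pos.2 hs
  set f : EuclideanSpace ℝ (Fin 3) → ENNReal :=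
    fun z => ENNReal.ofReal ((‖z‖^2 + s) ^ (-P)) with hf
  have hfm : Measurable f := by
    apply Measurable.ennreal_ofReal
    fun_prop
  have key : (∫⁻ x : EuclideanSpace ℝ (Fin 3), f (c • x))
      = ENNReal.ofReal |(c ^ 3)⁻¹| * ∫⁻ z, f z := by
    rw [← lintegral_map hfm (measurable_const_smul c)]
    rw [show (fun x : EuclideanSpace ℝ (Fin 3) => c • x) = (c • ·) from rfl]
    rw [MeasureTheory.Measure.map_addHaar_smul volume hc0.ne', lintegral_smul_measure]
    congr
    simp [finrank_euclideanSpace_fin]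
  have hsc : ∀ x : EuclideanSpace ℝ (Fin 3), f (c • x)
      = ENNReal.ofReal (s ^ (-P)) * ENNReal.ofReal ((1 + ‖x‖^2) ^ (-P)) := by
    intro x
    have hn : ‖c • x‖^2 = s * ‖x‖^2 := by
      rw [norm_smul, mul_pow, Real.norm_eq_abs, sq_abs, Real.sq_sqrt hs.le]
    rw [hf]
    simp only [hn]
    rw [show s * ‖x‖^2 + s = s * (1 + ‖x‖^2) by ring,
      Real.mul_rpow hs.le (by positivity),
      ENNReal.ofReal_mul (by positivity)]
  have lhs_eq : (∫⁻ x : EuclideanSpace ℝ (Fin 3), f (c • x))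
      = ENNReal.ofReal (s ^ (-P)) * Ipot P := by
    simp_rw [hsc]
    exact lintegral_const_mul' _ _ ENNReal.ofReal_ne_top
  have habs : |(c ^ 3 : ℝ)⁻¹| = s ^ (-(3/2) : ℝ) := by
    rw [abs_of_pos (by positivity), hc, Real.sqrt_eq_rpow,
      ← Real.rpow_natCast (s ^ ((1:ℝ)/2)) 3, ← Real.rpow_mul hs.le,
      ← Real.rpow_neg_one (s ^ _), ← Real.rpow_mul hs.le]
    norm_num
  rw [habs] at key
  rw [lhs_eq] at key
  have h1 : ENNReal.ofReal (s ^ ((3:ℝ)/2)) * ENNReal.ofReal (s ^ (-(3/2) : ℝ)) = 1 := by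
    rw [← ENNReal.ofReal_mul (by positivity), ← Real.rpow_add hs]
    norm_num
  calc ∫⁻ z, f z = (ENNReal.ofReal (s ^ ((3:ℝ)/2)) * ENNReal.ofReal (s ^ (-(3/2) : ℝ)))
        * ∫⁻ z, f z := by rw [h1, one_mul]
    _ = ENNReal.ofReal (s ^ ((3:ℝ)/2)) * (ENNReal.ofReal (s ^ (-(3/2) : ℝ)) * ∫⁻ z, f z) := by
        ring
    _ = ENNReal.ofReal (s ^ ((3:ℝ)/2)) * (ENNReal.ofReal (s ^ (-P)) * Ipot P) := by rw [← key]
    _ = ENNReal.ofReal (s ^ (3/2 - P)) * Ipot P := by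
        rw [← mul_assoc, ← ENNReal.ofReal_mul (by positivity), ← Real.rpow_add hs]
        ring_nf

lemma holder_step {p p' K : ℝ} (hpq : p.HolderConjugate p')
    {f : EuclideanSpace ℝ (Fin 3) → ℝ} (hf : Measurable f)
    (hfK : eLpNorm f (ENNReal.ofReal p) volume ≤ ENNReal.ofReal K)
    (c : EuclideanSpace ℝ (Fin 3)) {s : ℝ} (hs : 0 < s) :
    ∫⁻ y, ENNReal.ofReal (|f y| * (‖c - y‖^2 + s) ^ (-(3:ℝ)/2)) ≤
      ENNReal.ofReal K * (Ipot (3*p'/2)) ^ (1/p') * ENNReal.ofReal (s ^ (-(3/(2*p)))) := by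
  set k : EuclideanSpace ℝ (Fin 3) → ℝ := fun y => (‖c - y‖^2 + s) ^ (-(3:ℝ)/2) with hk
  have hk0 : ∀ y, 0 ≤ k y := fun y => by positivity
  have hkm : Measurable k := by fun_prop
  have step1 : ∀ y, ENNReal.ofReal (|f y| * k y)
      = ENNReal.ofReal |f y| * ENNReal.ofReal (k y) := fun y =>
    ENNReal.ofReal_mul (abs_nonneg _)
  have holder := ENNReal.lintegral_mul_le_Lp_mul_Lq volume hpq
    (f := fun y => ENNReal.ofReal |f y|) (g := fun y => ENNReal.ofReal (k y))
    (hf.abs.ennreal_ofReal.aemeasurable) (hkm.ennreal_ofReal.aemeasurable)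
  have hfac1 : (∫⁻ y, (ENNReal.ofReal |f y|) ^ p) ^ (1/p) ≤ ENNReal.ofReal K := by
    have : eLpNorm f (ENNReal.ofReal p) volume
        = (∫⁻ y, (ENNReal.ofReal |f y|) ^ p) ^ (1/p) := by
      rw [eLpNorm_eq_lintegral_rpow_enorm_toReal (ENNReal.ofReal_pos.2 hpq.pos).ne' ENNReal.ofReal_ne_top]
      rw [ENNReal.toReal_ofReal hpq.nonneg]
      congr 1
      apply lintegral_congr
      intro y
      congr 1
      rw [← Real.norm_eq_abs, ofReal_norm]
    rwa [← this]
  have hfac2 : (∫⁻ y, (ENNReal.ofReal (k y)) ^ p') ^ (1/p')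
      ≤ (Ipot (3*p'/2)) ^ (1/p') * ENNReal.ofReal (s ^ (-(3/(2*p)))) := by
    have hkp : ∀ y, (ENNReal.ofReal (k y)) ^ p'
        = ENNReal.ofReal ((‖c - y‖^2 + s) ^ (-(3*p'/2))) := by
      intro y
      rw [ENNReal.ofReal_rpow_of_nonneg (hk0 y) hpq.symm.nonneg]
      congr 1
      have hA : (0:ℝ) ≤ ‖c - y‖^2 + s := by positivity
      show ((‖c - y‖^2 + s) ^ ((-3:ℝ)/2)) ^ p' = _
      rw [← Real.rpow_mul hA]
      congr 1
      ring
    simp_rw [hkp]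
    have htrans : (∫⁻ y, ENNReal.ofReal ((‖c - y‖^2 + s) ^ (-(3*p'/2))))
        = ∫⁻ z : EuclideanSpace ℝ (Fin 3), ENNReal.ofReal ((‖z‖^2 + s) ^ (-(3*p'/2))) := by
      have hm : Measurable (fun z : EuclideanSpace ℝ (Fin 3) =>
          ENNReal.ofReal ((‖z‖^2 + s) ^ (-(3*p'/2)))) := by
        apply Measurable.ennreal_ofReal; fun_prop
      exact (MeasureTheory.Measure.measurePreserving_sub_left volume c).lintegral_comp hm
    rw [htrans, lintegral_kernel _ hs]
    rw [ENNReal.mul_rpow_of_nonneg _ _ hpq.symm.one_div_nonneg]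
    rw [ENNReal.ofReal_rpow_of_pos (Real.rpow_pos_of_pos hs _)]
    rw [← Real.rpow_mul hs.le]
    have hexp : (3/2 - 3*p'/2) * (1/p') = -(3/(2*p)) := by
      have h1 : p' = p/(p-1) := hpq.conjugate_eq
      have hp1 : p - 1 ≠ 0 := sub_ne_zero.2 (ne_of_gt hpq.lt)
      have hp0 : p ≠ 0 := hpq.ne_zero
      rw [h1]
      field_simp
      ring
    rw [hexp, mul_comm]
  calc ∫⁻ y, ENNReal.ofReal (|f y| * k y)
      = ∫⁻ y, (fun y => ENNReal.ofReal |f y|) y * (fun y => ENNReal.ofReal (k y)) y := by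
        simp_rw [step1]
    _ ≤ (∫⁻ y, (ENNReal.ofReal |f y|) ^ p) ^ (1/p)
        * (∫⁻ y, (ENNReal.ofReal (k y)) ^ p') ^ (1/p') := holder
    _ ≤ ENNReal.ofReal K * ((Ipot (3*p'/2)) ^ (1/p') * ENNReal.ofReal (s ^ (-(3/(2*p))))) :=
        mul_le_mul' hfac1 hfac2
    _ = ENNReal.ofReal K * (Ipot (3*p'/2)) ^ (1/p') * ENNReal.ofReal (s ^ (-(3/(2*p)))) := by
        rw [mul_assoc]

/-- Pointwise bound for the Oseen-type space-time potential of a function `g`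
supported in the ball `B_R`, uniformly bounded in `L^q ∩ L^r` in the space
variable, with `q > 3/2` and `1 < r < 3/2`. -/
theorem oseen_spacetime_potential_bounded
    (R q r K : ℝ) (hR : 0 < R) (hq : 3/2 < q) (hr1 : 1 < r) (hr2 : r < 3/2)
    (ζ : EuclideanSpace ℝ (Fin 3))
    (g : EuclideanSpace ℝ (Fin 3) → ℝ → ℝ)
    (hmeas : Measurable fun p : EuclideanSpace ℝ (Fin 3) × ℝ => g p.1 p.2)
    (hsupp : ∀ (τ : ℝ) (y : EuclideanSpace ℝ (Fin 3)), R ≤ ‖y‖ → g y τ = 0)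
    (hKq : ∀ τ : ℝ, eLpNorm (fun y => g y τ) (ENNReal.ofReal q) volume ≤
      ENNReal.ofReal K)
    (hKr : ∀ τ : ℝ, eLpNorm (fun y => g y τ) (ENNReal.ofReal r) volume ≤
      ENNReal.ofReal K) :
    ∃ C : ℝ, 0 < C ∧ ∀ (x : EuclideanSpace ℝ (Fin 3)) (t : ℝ),
      (∫⁻ s in Set.Ioi (0:ℝ), ∫⁻ y in Metric.ball (0 : EuclideanSpace ℝ (Fin 3)) R,
          ENNReal.ofReal (|g y (t - s)| * (‖x + s • ζ - y‖^2 + s) ^ (-(3:ℝ)/2)))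
        ≤ ENNReal.ofReal (C * K) := by
  have hq1 : 1 < q := by linarith
  have hqc : q.HolderConjugate (q/(q-1)) := Real.HolderConjugate.conjExponent hq1
  have hrc : r.HolderConjugate (r/(r-1)) := Real.HolderConjugate.conjExponent hr1
  set q' := q/(q-1) with hq'def
  set r' := r/(r-1) with hr'def
  have hPq : 3/2 < 3*q'/2 := by have := hqc.symm.lt; linarith
  have hPr : 3/2 < 3*r'/2 := by have := hrc.symm.lt; linarith
  set Dq : ENNReal := (Ipot (3*q'/2)) ^ (1/q') with hDq
  set Dr : ENNReal := (Ipot (3*r'/2)) ^ (1/r') with hDr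
  have hDq_top : Dq ≠ ⊤ :=
    (ENNReal.rpow_lt_top_of_nonneg hqc.symm.one_div_nonneg (Ipot_lt_top hPq).ne).ne
  have hDr_top : Dr ≠ ⊤ :=
    (ENNReal.rpow_lt_top_of_nonneg hrc.symm.one_div_nonneg (Ipot_lt_top hPr).ne).ne
  set J1 : ENNReal := ∫⁻ s in Set.Ioc (0:ℝ) 1, ENNReal.ofReal (s ^ (-(3/(2*q)))) with hJ1def
  set J2 : ENNReal := ∫⁻ s in Set.Ioi (1:ℝ), ENNReal.ofReal (s ^ (-(3/(2*r)))) with hJ2def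
  have hJ1 : J1 < ⊤ := by
    refine IntegrableOn.setLIntegral_lt_top ?_
    rw [← intervalIntegrable_iff_integrableOn_Ioc_of_le zero_le_one]
    apply intervalIntegral.intervalIntegrable_rpow'
    rw [neg_lt_neg_iff, div_lt_one (by linarith)]
    linarith
  have hJ2 : J2 < ⊤ := by
    refine IntegrableOn.setLIntegral_lt_top ?_
    apply integrableOn_Ioi_rpow_of_lt _ zero_lt_one
    rw [neg_lt_neg_iff, lt_div_iff₀ (by linarith)]
    linarith
  set B : ENNReal := Dq * J1 + Dr * J2 with hBdef
  have hB : B ≠ ⊤ := by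
    apply ENNReal.add_ne_top.2
    exact ⟨(ENNReal.mul_lt_top hDq_top.lt_top hJ1).ne, (ENNReal.mul_lt_top hDr_top.lt_top hJ2).ne⟩
  refine ⟨B.toReal + 1, by positivity, fun x t => ?_⟩
  have hgm : ∀ τ : ℝ, Measurable (fun y => g y τ) := fun τ =>
    hmeas.comp (measurable_id.prodMk measurable_const)
  -- pointwise bound for the inner integral
  have hinner : ∀ p p' : ℝ, p.HolderConjugate p' →
      (∀ τ, eLpNorm (fun y => g y τ) (ENNReal.ofReal p) volume ≤ ENNReal.ofReal K) →
      ∀ s : ℝ, 0 < s →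
      (∫⁻ y in Metric.ball (0 : EuclideanSpace ℝ (Fin 3)) R,
          ENNReal.ofReal (|g y (t - s)| * (‖x + s • ζ - y‖^2 + s) ^ (-(3:ℝ)/2)))
        ≤ ENNReal.ofReal K * (Ipot (3*p'/2)) ^ (1/p') * ENNReal.ofReal (s ^ (-(3/(2*p)))) := by
    intro p p' hpc hKp s hs
    refine le_trans (setLIntegral_le_lintegral _ _) ?_
    exact holder_step hpc (hgm (t - s)) (hKp (t - s)) (x + s • ζ) hs
  have hsplit : Set.Ioc (0:ℝ) 1 ∪ Set.Ioi (1:ℝ) = Set.Ioi (0:ℝ) :=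
    Set.Ioc_union_Ioi_eq_Ioi zero_le_one
  rw [← hsplit, lintegral_union measurableSet_Ioi (Set.Ioc_disjoint_Ioi le_rfl)]
  have hbound1 : (∫⁻ s in Set.Ioc (0:ℝ) 1, ∫⁻ y in Metric.ball (0 : EuclideanSpace ℝ (Fin 3)) R,
      ENNReal.ofReal (|g y (t - s)| * (‖x + s • ζ - y‖^2 + s) ^ (-(3:ℝ)/2)))
      ≤ ENNReal.ofReal K * Dq * J1 := by
    calc _ ≤ ∫⁻ s in Set.Ioc (0:ℝ) 1,
          (ENNReal.ofReal K * Dq) * ENNReal.ofReal (s ^ (-(3/(2*q)))) := by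
          refine setLIntegral_mono' measurableSet_Ioc fun s hs => ?_
          refine le_trans (hinner q q' hqc hKq s hs.1) (le_of_eq ?_)
          rw [hDq, mul_assoc]
      _ = ENNReal.ofReal K * Dq * J1 := by
          rw [hJ1def]
          exact lintegral_const_mul' _ _ (ENNReal.mul_ne_top ENNReal.ofReal_ne_top hDq_top)
  have hbound2 : (∫⁻ s in Set.Ioi (1:ℝ), ∫⁻ y in Metric.ball (0 : EuclideanSpace ℝ (Fin 3)) R,
      ENNReal.ofReal (|g y (t - s)| * (‖x + s • ζ - y‖^2 + s) ^ (-(3:ℝ)/2)))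
      ≤ ENNReal.ofReal K * Dr * J2 := by
    calc _ ≤ ∫⁻ s in Set.Ioi (1:ℝ),
          (ENNReal.ofReal K * Dr) * ENNReal.ofReal (s ^ (-(3/(2*r)))) := by
          refine setLIntegral_mono' measurableSet_Ioi fun s hs => ?_
          refine le_trans (hinner r r' hrc hKr s (lt_trans zero_lt_one hs)) (le_of_eq ?_)
          rw [hDr, mul_assoc]
      _ = ENNReal.ofReal K * Dr * J2 := by
          rw [hJ2def]
          exact lintegral_const_mul' _ _ (ENNReal.mul_ne_top ENNReal.ofReal_ne_top hDr_top)
  calc _ ≤ ENNReal.ofReal K * Dq * J1 + ENNReal.ofReal K * Dr * J2 :=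
        add_le_add hbound1 hbound2
    _ = ENNReal.ofReal K * B := by rw [hBdef]; ring
    _ ≤ ENNReal.ofReal K * ENNReal.ofReal (B.toReal + 1) := by
        refine mul_le_mul_right ?_ _
        calc B = ENNReal.ofReal B.toReal := (ENNReal.ofReal_toReal hB).symm
          _ ≤ ENNReal.ofReal (B.toReal + 1) := ENNReal.ofReal_le_ofReal (by linarith)
    _ = ENNReal.ofReal ((B.toReal + 1) * K) := by
        rw [mul_comm, ← ENNReal.ofReal_mul (by linarith [ENNReal.toReal_nonneg (a := B)] : (0:ℝ) ≤ B.toReal + 1)]
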